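/- (Existence of feasible parameters, continuous time.) Suppose there exists δ̄ > 0 such that Λ_m(δ̄) > M_λ · M_nc(δ̄). Then the set 𝒮_fp := {(δ,β,η,ε) ∈ (0,∞)⁴ : β^{-1} σ_η < δ γ(δ,η,ε) − √η ε M_λ} is a nonempty open subset of (0,∞)⁴. -/

import Mathlib

open Set Metric MeasureTheory Filter
open scoped RealInnerProductSpace Topology

set_option synthInstance.maxHeartbeats 1000000
set_option maxHeartbeats 1000000
noncomputable section

namespace TVOpt

/-- Euclidean space `ℝ^d`. -/
abbrev E (d : ℕ) := EuclideanSpace ℝ (Fin d)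

/-- Normal cone of a (convex) set `C` at a point `x`. -/
def normalCone {d : ℕ} (C : Set (E d)) (x : E d) : Set (E d) :=
  {y | ∀ w ∈ C, ⟪y, w - x⟫ ≤ 0}

/-- The nonnegative orthant `ℝ^m_+`. -/
def orthant (m : ℕ) : Set (E m) := {v | ∀ i, 0 ≤ v i}

/-- `p` is the Euclidean metric projection of `v` onto `C`. -/
def IsProjection {d : ℕ} (C : Set (E d)) (v p : E d) : Prop :=
  p ∈ C ∧ ∀ w ∈ C, dist v p ≤ dist v w

/-- The `η`-weighted norm `‖(x,λ)‖_η = sqrt(‖x‖² + η⁻¹‖λ‖²)`. -/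
def etaNorm {n m : ℕ} (η : ℝ) (z : E n × E m) : ℝ :=
  Real.sqrt (‖z.1‖ ^ 2 + η⁻¹ * ‖z.2‖ ^ 2)

variable {n m : ℕ}

/-- Maximal speed `σ_η` of a trajectory on `[0,S]`. -/
def sigmaEta (S : ℝ) (zstar : ℝ → E n × E m) (η : ℝ) : ℝ :=
  ⨆ p : {q : ℝ × ℝ // q.1 ∈ Icc 0 S ∧ q.2 ∈ Icc 0 S ∧ q.1 ≠ q.2},
    etaNorm η (zstar p.1.2 - zstar p.1.1) / |p.1.2 - p.1.1|

/-- `M_λ = sup_{t ∈ [0,S]} ‖λ*(t) − λ_prior‖`. -/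
def Mlam (S : ℝ) (ls : ℝ → E m) (lamprior : E m) : ℝ :=
  ⨆ t : Icc (0:ℝ) S, ‖ls t.1 - lamprior‖

/-- `M_nc(δ)`:  sup of the second-derivative norm of `f^nc` near the trajectory. -/
def Mnc (S : ℝ) (fnc : E n → ℝ → E m) (xs : ℝ → E n) (δ : ℝ) : ℝ :=
  ⨆ p : {q : ℝ × E n // q.1 ∈ Icc 0 S ∧ ‖q.2‖ ≤ δ},
    ‖fderiv ℝ (fderiv ℝ (fun x => fnc x p.1.1)) (xs p.1.1 + p.1.2)‖

/-- `M_c(δ)`:  sup of the second-derivative norm of `f^c` near the trajectory. -/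
def Mcc (S : ℝ) (fc : E n → ℝ → E m) (xs : ℝ → E n) (δ : ℝ) : ℝ :=
  ⨆ p : {q : ℝ × E n // q.1 ∈ Icc 0 S ∧ ‖q.2‖ ≤ δ},
    ‖fderiv ℝ (fderiv ℝ (fun x => fc x p.1.1)) (xs p.1.1 + p.1.2)‖

/-- `L_f(δ)`: sup of the Jacobian operator norm of `f` near the trajectory. -/
def Lf (S : ℝ) (f : E n → ℝ → E m) (xs : ℝ → E n) (δ : ℝ) : ℝ :=
  ⨆ p : {q : ℝ × E n // q.1 ∈ Icc 0 S ∧ ‖q.2‖ ≤ δ},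
    ‖fderiv ℝ (fun x => f x p.1.1) (xs p.1.1 + p.1.2)‖

/-- `sup_{t∈[0,S]} ‖λ*(t)‖`. -/
def supLam (S : ℝ) (ls : ℝ → E m) : ℝ := ⨆ t : Icc (0:ℝ) S, ‖ls t.1‖

/-- `D(δ,η) = √η L_f(δ) + M_c(δ) sup_t ‖λ*(t)‖`. -/
def Dconst (S : ℝ) (fc fnc : E n → ℝ → E m) (xs : ℝ → E n) (ls : ℝ → E m) (δ η : ℝ) : ℝ :=
  Real.sqrt η * Lf S (fun x t => fc x t + fnc x t) xs δ + Mcc S fc xs δ * supLam S ls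

/-- Hessian of a scalar function, as a linear operator on `ℝ^d`. -/
def hessOp {d : ℕ} (g : E d → ℝ) (x : E d) : E d →L[ℝ] E d :=
  fderiv ℝ (gradient g) x

/-- Nonconvex part of the Lagrangian, `ℒ^nc(x,λ,t) = c(x,t) + λᵀ f^nc(x,t)`. -/
def Lnc (c : E n → ℝ → ℝ) (fnc : E n → ℝ → E m) (x : E n) (lam : E m) (t : ℝ) : ℝ :=
  c x t + ⟪lam, fnc x t⟫

/-- Averaged Hessian `H̄_{ℒ^nc}(u,t)`. -/
def HbarL (c : E n → ℝ → ℝ) (fnc : E n → ℝ → E m) (xs : ℝ → E n) (ls : ℝ → E m)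
    (u : E n) (t : ℝ) : E n →L[ℝ] E n :=
  ∫ θ in (0:ℝ)..1, hessOp (fun x => Lnc c fnc x (ls t) t) (xs t + θ • u)

/-- Averaged Hessian `H̄_{f^c_i}(u,t)`. -/
def Hbarfc (fc : E n → ℝ → E m) (xs : ℝ → E n) (i : Fin m) (u : E n) (t : ℝ) :
    E n →L[ℝ] E n :=
  ∫ θ in (0:ℝ)..1, (2 * (1 - θ)) • hessOp (fun x => fc x t i) (xs t + θ • u)

/-- `ρ^(P)(δ,α,η,ε)`. -/
def rhoP (S : ℝ) (c : E n → ℝ → ℝ) (fc fnc : E n → ℝ → E m) (xs : ℝ → E n) (ls : ℝ → E m)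
    (δ α η ε : ℝ) : ℝ :=
  ⨆ p : {q : ℝ × E n // q.1 ∈ Icc 0 S ∧ ‖q.2‖ ≤ δ},
    ‖((1 : E n →L[ℝ] E n) - α • HbarL c fnc xs ls p.1.2 p.1.1) ^ 2
      - (α * (1 - η * α * ε)) • ∑ i, ls p.1.1 i • Hbarfc fc xs i p.1.2 p.1.1‖

/-- The contraction factor `ρ(δ,α,η,ε)`. -/
def rho (S : ℝ) (c : E n → ℝ → ℝ) (fc fnc : E n → ℝ → E m) (xs : ℝ → E n) (ls : ℝ → E m)
    (δ α η ε : ℝ) : ℝ :=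
  Real.sqrt (max (rhoP S c fc fnc xs ls δ α η ε) ((1 - η * α * ε) ^ 2)
    + α * (1 - η * α * ε) * (Real.sqrt η * δ * Mnc S fnc xs δ / 2)
    + α ^ 2 * (2 * (⨆ p : {q : ℝ × E n // q.1 ∈ Icc 0 S ∧ ‖q.2‖ ≤ δ},
          ‖(η * ε) • (1 : E n →L[ℝ] E n) - HbarL c fnc xs ls p.1.2 p.1.1‖)
            * Dconst S fc fnc xs ls δ η
        + Dconst S fc fnc xs ls δ η ^ 2))

/-- The constant `κ(δ,α,η,ε)`. -/
def kappa (S : ℝ) (c : E n → ℝ → ℝ) (fc fnc : E n → ℝ → E m) (xs : ℝ → E n) (ls : ℝ → E m)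
    (δ α η ε : ℝ) : ℝ :=
  max 1 (max ((1 - η * α * ε) / rho S c fc fnc xs ls δ α η ε)
    (Real.sqrt η * α * Lf S (fun x t => fc x t + fnc x t) xs δ
      / rho S c fc fnc xs ls δ α η ε))

/-- Smallest eigenvalue of a symmetric operator, `inf_{‖h‖=1} ⟪A h, h⟫`. -/
def lambdaMin {d : ℕ} (A : E d →L[ℝ] E d) : ℝ :=
  ⨅ h : {h : E d // ‖h‖ = 1}, ⟪A h.1, h.1⟫

/-- `Λ_m(δ)`. -/
def LambdaM (S : ℝ) (c : E n → ℝ → ℝ) (fc fnc : E n → ℝ → E m) (xs : ℝ → E n)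
    (ls : ℝ → E m) (δ : ℝ) : ℝ :=
  ⨅ p : {q : ℝ × E n // q.1 ∈ Icc 0 S ∧ ‖q.2‖ ≤ δ},
    lambdaMin (HbarL c fnc xs ls p.1.2 p.1.1
      + (2⁻¹ : ℝ) • ∑ i, ls p.1.1 i • Hbarfc fc xs i p.1.2 p.1.1)

/-- `γ(δ,η,ε) = min{Λ_m(δ), ηε} − (√η/4) δ M_nc(δ)`. -/
def gammaC (S : ℝ) (c : E n → ℝ → ℝ) (fc fnc : E n → ℝ → E m) (xs : ℝ → E n)
    (ls : ℝ → E m) (δ η ε : ℝ) : ℝ :=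
  min (LambdaM S c fc fnc xs ls δ) (η * ε) - Real.sqrt η / 4 * δ * Mnc S fnc xs δ

/-- The standing data and assumptions of the time-varying nonconvex problem. -/
structure Problem (n m : ℕ) where
  S : ℝ
  hS : 0 < S
  X : ℝ → Set (E n)
  c : E n → ℝ → ℝ
  fc : E n → ℝ → E m
  fnc : E n → ℝ → E m
  hXne : ∀ t ∈ Icc 0 S, (X t).Nonempty
  hXcl : ∀ t ∈ Icc 0 S, IsClosed (X t)
  hXcv : ∀ t ∈ Icc 0 S, Convex ℝ (X t)
  hc : ∀ t ∈ Icc 0 S, ContDiff ℝ 2 fun x => c x t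
  hfc : ∀ t ∈ Icc 0 S, ContDiff ℝ 2 fun x => fc x t
  hfnc : ∀ t ∈ Icc 0 S, ContDiff ℝ 2 fun x => fnc x t
  hcHess : ContinuousOn (fun p : E n × ℝ => fderiv ℝ (fderiv ℝ fun x => c x p.2) p.1)
    (univ ×ˢ Icc 0 S)
  hfcHess : ∀ i : Fin m, ContinuousOn
    (fun p : E n × ℝ => fderiv ℝ (fderiv ℝ fun x => fc x p.2 i) p.1) (univ ×ˢ Icc 0 S)
  hfncHess : ∀ i : Fin m, ContinuousOn
    (fun p : E n × ℝ => fderiv ℝ (fderiv ℝ fun x => fnc x p.2 i) p.1) (univ ×ˢ Icc 0 S)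
  hconv : ∀ t ∈ Icc 0 S, ∀ i : Fin m, ConvexOn ℝ univ fun x => fc x t i

/-- The full constraint function `f = f^c + f^nc`. -/
def Problem.f (P : Problem n m) : E n → ℝ → E m := fun x t => P.fc x t + P.fnc x t

/-- The KKT conditions at time `t`. -/
def IsKKT (P : Problem n m) (t : ℝ) (x : E n) (lam : E m) : Prop :=
  x ∈ P.X t ∧ lam ∈ orthant m ∧
    -(gradient (fun y => P.c y t) x
        + ContinuousLinearMap.adjoint (fderiv ℝ (fun y => P.f y t) x) lam)
      ∈ normalCone (P.X t) x ∧
    P.f x t ∈ normalCone (orthant m) lam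

/-- A Lipschitz trajectory with values in `𝒳(t) × ℝ^m_+`. -/
def IsTraj (P : Problem n m) (xs : ℝ → E n) (ls : ℝ → E m) : Prop :=
  (∃ L : NNReal, LipschitzOnWith L (fun t => (xs t, ls t)) (Icc 0 P.S)) ∧
    ∀ t ∈ Icc 0 P.S, xs t ∈ P.X t ∧ ls t ∈ orthant m

/-- A Lipschitz KKT trajectory. -/
def IsKKTTraj (P : Problem n m) (xs : ℝ → E n) (ls : ℝ → E m) : Prop :=
  IsTraj P xs ls ∧ ∀ t ∈ Icc 0 P.S, IsKKT P t (xs t) (ls t)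

/-- One step of the regularized primal-dual gradient method at time `t`,
from `zp` to `zn`. -/
def IsRPDStep (P : Problem n m) (lamprior : E m) (α η ε t : ℝ)
    (zp zn : E n × E m) : Prop :=
  IsProjection (P.X t)
    (zp.1 - α • (gradient (fun x => P.c x t) zp.1
      + ContinuousLinearMap.adjoint (fderiv ℝ (fun x => P.f x t) zp.1) zp.2)) zn.1 ∧
  IsProjection (orthant m)
    (zp.2 + (η * α) • (P.f zp.1 t - ε • (zp.2 - lamprior))) zn.2

/-- A Lipschitz solution of the regularized primal-dual gradient flow. -/
def IsFlowSol (P : Problem n m) (lamprior : E m) (β η ε : ℝ)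
    (z : ℝ → E n × E m) : Prop :=
  (∃ L : NNReal, LipschitzOnWith L z (Icc 0 P.S)) ∧
  (∀ t ∈ Icc 0 P.S, (z t).1 ∈ P.X t ∧ (z t).2 ∈ orthant m) ∧
  ∀ᵐ t ∂(volume.restrict (Icc 0 P.S)), ∃ dz : E n × E m, HasDerivAt z dz t ∧
    (-dz.1 - β • (gradient (fun x => P.c x t) (z t).1
        + ContinuousLinearMap.adjoint (fderiv ℝ (fun x => P.f x t) (z t).1) (z t).2)
      ∈ normalCone (P.X t) (z t).1) ∧
    (-dz.2 + (η * β) • (P.f (z t).1 t - ε • ((z t).2 - lamprior))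
      ∈ normalCone (orthant m) (z t).2)


/-- The set of feasible parameters `(δ,β,η,ε)` for the continuous-time algorithm. -/
def SfpC {n m : ℕ} (P : Problem n m) (xs : ℝ → E n) (ls : ℝ → E m) (lamprior : E m) :
    Set (ℝ × ℝ × ℝ × ℝ) :=
  {q | 0 < q.1 ∧ 0 < q.2.1 ∧ 0 < q.2.2.1 ∧ 0 < q.2.2.2 ∧
    q.2.1⁻¹ * sigmaEta P.S (fun t => (xs t, ls t)) q.2.2.1
      < q.1 * gammaC P.S P.c P.fc P.fnc xs ls q.1 q.2.2.1 q.2.2.2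
        - Real.sqrt q.2.2.1 * q.2.2.2 * Mlam P.S ls lamprior}



-- ===== auxiliary lemmas =====

section Aux

lemma sqrt_add_le {x y : ℝ} (hx : 0 ≤ x) (hy : 0 ≤ y) :
    Real.sqrt (x + y) ≤ Real.sqrt x + Real.sqrt y := by
  calc Real.sqrt (x + y) ≤ Real.sqrt ((Real.sqrt x + Real.sqrt y) ^ 2) := by
        apply Real.sqrt_le_sqrt
        nlinarith [Real.sq_sqrt hx, Real.sq_sqrt hy, Real.sqrt_nonneg x, Real.sqrt_nonneg y]
    _ = _ := Real.sqrt_sq (by positivity)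

lemma abs_inner_unit_le {d : ℕ} (C : E d →L[ℝ] E d) {h : E d} (hh : ‖h‖ = 1) :
    |⟪C h, h⟫| ≤ ‖C‖ := by
  calc |⟪C h, h⟫| ≤ ‖C h‖ * ‖h‖ := abs_real_inner_le_norm _ _
    _ ≤ (‖C‖ * ‖h‖) * ‖h‖ := by gcongr; exact C.le_opNorm _
    _ = ‖C‖ := by rw [hh]; ring

lemma bddBelow_inner_sphere {d : ℕ} (B : E d →L[ℝ] E d) :
    BddBelow (Set.range fun h : {h : E d // ‖h‖ = 1} => ⟪B h.1, h.1⟫) := by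
  refine ⟨-‖B‖, ?_⟩
  rintro _ ⟨h, rfl⟩
  linarith [(abs_le.1 (abs_inner_unit_le B h.2)).1]

lemma lambdaMin_le_add {d : ℕ} (A B : E d →L[ℝ] E d) :
    lambdaMin A ≤ lambdaMin B + ‖A - B‖ := by
  unfold lambdaMin
  by_cases hd : Nonempty {h : E d // ‖h‖ = 1}
  · rw [← sub_le_iff_le_add]
    refine le_ciInf fun h => ?_
    have h1 : ⨅ h' : {h : E d // ‖h‖ = 1}, ⟪A h'.1, h'.1⟫ ≤ ⟪A h.1, h.1⟫ :=
      ciInf_le (bddBelow_inner_sphere A) h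
    have h2 : ⟪A h.1, h.1⟫ - ⟪B h.1, h.1⟫ ≤ ‖A - B‖ := by
      have e : ⟪A h.1, h.1⟫ - ⟪B h.1, h.1⟫ = ⟪(A - B) h.1, h.1⟫ := by
        rw [ContinuousLinearMap.sub_apply, inner_sub_left]
      rw [e]
      exact (abs_le.1 (abs_inner_unit_le (A - B) h.2)).2
    linarith
  · rw [not_nonempty_iff] at hd
    haveI := hd
    have e1 : (⨅ h : {h : E d // ‖h‖ = 1}, (⟪A h.1, h.1⟫ : ℝ)) = 0 :=
      Real.iInf_of_isEmpty _
    have e2 : (⨅ h : {h : E d // ‖h‖ = 1}, (⟪B h.1, h.1⟫ : ℝ)) = 0 :=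
      Real.iInf_of_isEmpty _
    rw [e1, e2]
    simpa using norm_nonneg (A - B)

lemma lipschitzWith_lambdaMin {d : ℕ} :
    LipschitzWith 1 (lambdaMin : (E d →L[ℝ] E d) → ℝ) := by
  apply LipschitzWith.of_dist_le_mul
  intro A B
  rw [Real.dist_eq, dist_eq_norm, NNReal.coe_one, one_mul, abs_sub_le_iff]
  constructor
  · linarith [lambdaMin_le_add A B]
  · have := lambdaMin_le_add B A
    rw [show B - A = -(A - B) from (neg_sub A B).symm, norm_neg] at this
    linarith

lemma continuous_lambdaMin {d : ℕ} :
    Continuous (lambdaMin : (E d →L[ℝ] E d) → ℝ) :=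
  lipschitzWith_lambdaMin.continuous


section supinf

variable {n : ℕ} {S : ℝ}

lemma K_nonempty (hS : 0 < S) {δ : ℝ} (hδ : 0 ≤ δ) :
    Nonempty {q : ℝ × E n // q.1 ∈ Icc 0 S ∧ ‖q.2‖ ≤ δ} :=
  ⟨⟨(0, 0), ⟨left_mem_Icc.2 hS.le, by simpa using hδ⟩⟩⟩

lemma continuousAt_iSup_K (hS : 0 < S) (G : ℝ × E n → ℝ)
    (hG : ContinuousOn G (Icc 0 S ×ˢ (univ : Set (E n)))) {δ₀ : ℝ} (hδ₀ : 0 < δ₀) :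
    ContinuousAt (fun δ : ℝ =>
      ⨆ p : {q : ℝ × E n // q.1 ∈ Icc 0 S ∧ ‖q.2‖ ≤ δ}, G p.1) δ₀ := by
  set C : Set (ℝ × E n) := Icc 0 S ×ˢ closedBall 0 (δ₀ + 1) with hC
  have hCcp : IsCompact C := isCompact_Icc.prod (isCompact_closedBall _ _)
  have hGC : ContinuousOn G C := hG.mono (fun p hp => ⟨hp.1, mem_univ _⟩)
  obtain ⟨Mb, hMb⟩ := hCcp.exists_bound_of_continuousOn hGC
  have hmem : ∀ {δ : ℝ}, δ ≤ δ₀ + 1 → ∀ (p : ℝ × E n), p.1 ∈ Icc 0 S → ‖p.2‖ ≤ δ → p ∈ C :=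
    fun hδ p h1 h2 => ⟨h1, by rw [mem_closedBall, dist_zero_right]; linarith⟩
  have hbdd : ∀ {δ : ℝ}, δ ≤ δ₀ + 1 →
      BddAbove (Set.range fun p : {q : ℝ × E n // q.1 ∈ Icc 0 S ∧ ‖q.2‖ ≤ δ} => G p.1) := by
    intro δ hδ
    refine ⟨Mb, ?_⟩
    rintro _ ⟨p, rfl⟩
    have h := hMb _ (hmem hδ p.1 p.2.1 p.2.2)
    rw [Real.norm_eq_abs] at h
    exact (le_abs_self _).trans h
  rw [Metric.continuousAt_iff]
  intro ε hε
  have hUC := hCcp.uniformContinuousOn_of_continuous hGC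
  rw [Metric.uniformContinuousOn_iff] at hUC
  obtain ⟨dd, hdd, hUC⟩ := hUC (ε / 2) (by linarith)
  refine ⟨min (min dd 1) (δ₀ / 2), by positivity, ?_⟩
  intro δ hdist
  rw [Real.dist_eq] at hdist
  have hr1 : |δ - δ₀| < dd := lt_of_lt_of_le hdist ((min_le_left _ _).trans (min_le_left _ _))
  have hr2 : |δ - δ₀| < 1 := lt_of_lt_of_le hdist ((min_le_left _ _).trans (min_le_right _ _))
  have hr3 : |δ - δ₀| < δ₀ / 2 := lt_of_lt_of_le hdist (min_le_right _ _)
  obtain ⟨hs1, hs2⟩ := abs_sub_lt_iff.1 hr3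
  obtain ⟨hs3, hs4⟩ := abs_sub_lt_iff.1 hr2
  obtain ⟨hs5, hs6⟩ := abs_sub_lt_iff.1 hr1
  have hδpos : 0 < δ := by linarith
  have key : ∀ u v : ℝ, 0 < u → u ≤ v → v ≤ δ₀ + 1 → v - u < dd →
      (⨆ p : {q : ℝ × E n // q.1 ∈ Icc 0 S ∧ ‖q.2‖ ≤ v}, G p.1)
        ≤ (⨆ p : {q : ℝ × E n // q.1 ∈ Icc 0 S ∧ ‖q.2‖ ≤ u}, G p.1) + ε / 2 := by
    intro u v hu huv hv hd
    haveI := K_nonempty (n := n) hS (by linarith : (0:ℝ) ≤ v)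
    refine ciSup_le fun p => ?_
    obtain ⟨⟨t, w⟩, ht, hw⟩ := p
    have hvpos : 0 < v := lt_of_lt_of_le hu huv
    set w' : E n := (u / v) • w with hw'def
    have hq : 0 ≤ u / v := by positivity
    have hq1 : u / v ≤ 1 := by
      rw [div_le_one hvpos]; exact huv
    have hw'le : ‖w'‖ ≤ u := by
      rw [hw'def, norm_smul, Real.norm_eq_abs, abs_of_nonneg hq]
      calc u / v * ‖w‖ ≤ u / v * v := by gcongr
        _ = u := by field_simp
    have hsub : ‖w - w'‖ ≤ v - u := by
      rw [hw'def, show w - (u / v) • w = (1 - u / v) • w by rw [sub_smul, one_smul]]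
      rw [norm_smul, Real.norm_eq_abs, abs_of_nonneg (by linarith)]
      calc (1 - u / v) * ‖w‖ ≤ (1 - u / v) * v := by gcongr <;> linarith
        _ = v - u := by field_simp
    have hdist2 : dist ((t, w) : ℝ × E n) (t, w') < dd := by
      rw [Prod.dist_eq]
      simp only [dist_self]
      rw [max_eq_right dist_nonneg, dist_eq_norm]
      exact lt_of_le_of_lt hsub hd
    have hGle : G (t, w) ≤ G (t, w') + ε / 2 := by
      have h1 := hUC (t, w) (hmem hv _ ht hw) (t, w')
        (hmem hv _ ht (hw'le.trans huv)) hdist2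
      rw [Real.dist_eq] at h1
      linarith [(abs_sub_lt_iff.1 h1).1]
    have hle2 : G (t, w') ≤
        ⨆ p : {q : ℝ × E n // q.1 ∈ Icc 0 S ∧ ‖q.2‖ ≤ u}, G p.1 :=
      le_ciSup (hbdd (by linarith)) ⟨(t, w'), ht, hw'le⟩
    linarith
  have mono : ∀ u v : ℝ, 0 ≤ u → u ≤ v → v ≤ δ₀ + 1 →
      (⨆ p : {q : ℝ × E n // q.1 ∈ Icc 0 S ∧ ‖q.2‖ ≤ u}, G p.1)
        ≤ (⨆ p : {q : ℝ × E n // q.1 ∈ Icc 0 S ∧ ‖q.2‖ ≤ v}, G p.1) := by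
    intro u v hu huv hv
    haveI := K_nonempty (n := n) hS hu
    exact ciSup_le fun p => le_ciSup (hbdd hv) ⟨p.1, p.2.1, p.2.2.trans huv⟩
  rw [Real.dist_eq, abs_sub_lt_iff]
  rcases le_total δ δ₀ with h | h
  · have k1 := key δ δ₀ hδpos h (by linarith) (by rw [abs_sub_comm] at hr1; linarith [le_abs_self (δ₀ - δ)])
    have k2 := mono δ δ₀ hδpos.le h (by linarith)
    constructor <;> linarith
  · have k1 := key δ₀ δ hδ₀ h (by linarith) (by linarith [le_abs_self (δ - δ₀)])
    have k2 := mono δ₀ δ hδ₀.le h (by linarith)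
    constructor <;> linarith

lemma continuousAt_iInf_K (hS : 0 < S) (G : ℝ × E n → ℝ)
    (hG : ContinuousOn G (Icc 0 S ×ˢ (univ : Set (E n)))) {δ₀ : ℝ} (hδ₀ : 0 < δ₀) :
    ContinuousAt (fun δ : ℝ =>
      ⨅ p : {q : ℝ × E n // q.1 ∈ Icc 0 S ∧ ‖q.2‖ ≤ δ}, G p.1) δ₀ := by
  set C : Set (ℝ × E n) := Icc 0 S ×ˢ closedBall 0 (δ₀ + 1) with hC
  have hCcp : IsCompact C := isCompact_Icc.prod (isCompact_closedBall _ _)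
  have hGC : ContinuousOn G C := hG.mono (fun p hp => ⟨hp.1, mem_univ _⟩)
  obtain ⟨Mb, hMb⟩ := hCcp.exists_bound_of_continuousOn hGC
  have hmem : ∀ {δ : ℝ}, δ ≤ δ₀ + 1 → ∀ (p : ℝ × E n), p.1 ∈ Icc 0 S → ‖p.2‖ ≤ δ → p ∈ C :=
    fun hδ p h1 h2 => ⟨h1, by rw [mem_closedBall, dist_zero_right]; linarith⟩
  have hbdd : ∀ {δ : ℝ}, δ ≤ δ₀ + 1 →
      BddBelow (Set.range fun p : {q : ℝ × E n // q.1 ∈ Icc 0 S ∧ ‖q.2‖ ≤ δ} => G p.1) := by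
    intro δ hδ
    refine ⟨-Mb, ?_⟩
    rintro _ ⟨p, rfl⟩
    have h := hMb _ (hmem hδ p.1 p.2.1 p.2.2)
    rw [Real.norm_eq_abs] at h
    linarith [(abs_le.1 h).1]
  rw [Metric.continuousAt_iff]
  intro ε hε
  have hUC := hCcp.uniformContinuousOn_of_continuous hGC
  rw [Metric.uniformContinuousOn_iff] at hUC
  obtain ⟨dd, hdd, hUC⟩ := hUC (ε / 2) (by linarith)
  refine ⟨min (min dd 1) (δ₀ / 2), by positivity, ?_⟩
  intro δ hdist
  rw [Real.dist_eq] at hdist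
  have hr1 : |δ - δ₀| < dd := lt_of_lt_of_le hdist ((min_le_left _ _).trans (min_le_left _ _))
  have hr2 : |δ - δ₀| < 1 := lt_of_lt_of_le hdist ((min_le_left _ _).trans (min_le_right _ _))
  have hr3 : |δ - δ₀| < δ₀ / 2 := lt_of_lt_of_le hdist (min_le_right _ _)
  obtain ⟨hs1, hs2⟩ := abs_sub_lt_iff.1 hr3
  obtain ⟨hs3, hs4⟩ := abs_sub_lt_iff.1 hr2
  obtain ⟨hs5, hs6⟩ := abs_sub_lt_iff.1 hr1
  have hδpos : 0 < δ := by linarith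
  have key : ∀ u v : ℝ, 0 < u → u ≤ v → v ≤ δ₀ + 1 → v - u < dd →
      (⨅ p : {q : ℝ × E n // q.1 ∈ Icc 0 S ∧ ‖q.2‖ ≤ u}, G p.1)
        ≤ (⨅ p : {q : ℝ × E n // q.1 ∈ Icc 0 S ∧ ‖q.2‖ ≤ v}, G p.1) + ε / 2 := by
    intro u v hu huv hv hd
    haveI := K_nonempty (n := n) hS (by linarith : (0:ℝ) ≤ v)
    rw [← sub_le_iff_le_add]
    refine le_ciInf fun p => ?_
    obtain ⟨⟨t, w⟩, ht, hw⟩ := p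
    have hvpos : 0 < v := lt_of_lt_of_le hu huv
    set w' : E n := (u / v) • w with hw'def
    have hq : 0 ≤ u / v := by positivity
    have hq1 : u / v ≤ 1 := by
      rw [div_le_one hvpos]; exact huv
    have hw'le : ‖w'‖ ≤ u := by
      rw [hw'def, norm_smul, Real.norm_eq_abs, abs_of_nonneg hq]
      calc u / v * ‖w‖ ≤ u / v * v := by gcongr
        _ = u := by field_simp
    have hsub : ‖w - w'‖ ≤ v - u := by
      rw [hw'def, show w - (u / v) • w = (1 - u / v) • w by rw [sub_smul, one_smul]]
      rw [norm_smul, Real.norm_eq_abs, abs_of_nonneg (by linarith)]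
      calc (1 - u / v) * ‖w‖ ≤ (1 - u / v) * v := by gcongr <;> linarith
        _ = v - u := by field_simp
    have hdist2 : dist ((t, w) : ℝ × E n) (t, w') < dd := by
      rw [Prod.dist_eq]
      simp only [dist_self]
      rw [max_eq_right dist_nonneg, dist_eq_norm]
      exact lt_of_le_of_lt hsub hd
    have hGle : G (t, w') ≤ G (t, w) + ε / 2 := by
      have h1 := hUC (t, w) (hmem hv _ ht hw) (t, w')
        (hmem hv _ ht (hw'le.trans huv)) hdist2
      rw [Real.dist_eq] at h1
      linarith [(abs_sub_lt_iff.1 h1).2]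
    have hle2 : (⨅ p : {q : ℝ × E n // q.1 ∈ Icc 0 S ∧ ‖q.2‖ ≤ u}, G p.1)
        ≤ G (t, w') :=
      ciInf_le (hbdd (by linarith)) ⟨(t, w'), ht, hw'le⟩
    linarith
  have mono : ∀ u v : ℝ, 0 ≤ u → u ≤ v → v ≤ δ₀ + 1 →
      (⨅ p : {q : ℝ × E n // q.1 ∈ Icc 0 S ∧ ‖q.2‖ ≤ v}, G p.1)
        ≤ (⨅ p : {q : ℝ × E n // q.1 ∈ Icc 0 S ∧ ‖q.2‖ ≤ u}, G p.1) := by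
    intro u v hu huv hv
    haveI := K_nonempty (n := n) hS hu
    exact le_ciInf fun p => ciInf_le (hbdd hv) ⟨p.1, p.2.1, p.2.2.trans huv⟩
  rw [Real.dist_eq, abs_sub_lt_iff]
  rcases le_total δ δ₀ with h | h
  · have k1 := key δ δ₀ hδpos h (by linarith) (by rw [abs_sub_comm] at hr1; linarith [le_abs_self (δ₀ - δ)])
    have k2 := mono δ δ₀ hδpos.le h (by linarith)
    constructor <;> linarith
  · have k1 := key δ₀ δ hδ₀ h (by linarith) (by linarith [le_abs_self (δ - δ₀)])
    have k2 := mono δ₀ δ hδ₀.le h (by linarith)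
    constructor <;> linarith

end supinf

section sigma
variable {n m : ℕ}

lemma etaNorm_le_etaNorm_add {η η' : ℝ} (hη' : 0 < η') (z : E n × E m) :
    etaNorm η z ≤ etaNorm η' z + Real.sqrt |η⁻¹ - η'⁻¹| * ‖z.2‖ := by
  unfold etaNorm
  have h1 : ‖z.1‖ ^ 2 + η⁻¹ * ‖z.2‖ ^ 2
      ≤ (‖z.1‖ ^ 2 + η'⁻¹ * ‖z.2‖ ^ 2) + |η⁻¹ - η'⁻¹| * ‖z.2‖ ^ 2 := by
    have h2 : η⁻¹ ≤ η'⁻¹ + |η⁻¹ - η'⁻¹| := by linarith [le_abs_self (η⁻¹ - η'⁻¹)]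
    nlinarith [sq_nonneg ‖z.2‖]
  calc Real.sqrt (‖z.1‖ ^ 2 + η⁻¹ * ‖z.2‖ ^ 2)
      ≤ Real.sqrt ((‖z.1‖ ^ 2 + η'⁻¹ * ‖z.2‖ ^ 2) + |η⁻¹ - η'⁻¹| * ‖z.2‖ ^ 2) :=
        Real.sqrt_le_sqrt h1
    _ ≤ Real.sqrt (‖z.1‖ ^ 2 + η'⁻¹ * ‖z.2‖ ^ 2) + Real.sqrt (|η⁻¹ - η'⁻¹| * ‖z.2‖ ^ 2) := by
        exact sqrt_add_le (by positivity) (by positivity)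
    _ = Real.sqrt (‖z.1‖ ^ 2 + η'⁻¹ * ‖z.2‖ ^ 2) + Real.sqrt |η⁻¹ - η'⁻¹| * ‖z.2‖ := by
        rw [Real.sqrt_mul (abs_nonneg _), Real.sqrt_sq (norm_nonneg _)]

lemma norm_le_lip {S : ℝ} {z : ℝ → E n × E m} {L : NNReal}
    (hL : LipschitzOnWith L z (Icc 0 S)) {t₁ t₂ : ℝ} (h1 : t₁ ∈ Icc 0 S)
    (h2 : t₂ ∈ Icc 0 S) :
    ‖(z t₂ - z t₁).1‖ ≤ L * |t₂ - t₁| ∧ ‖(z t₂ - z t₁).2‖ ≤ L * |t₂ - t₁| := by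
  have hd : dist (z t₂) (z t₁) ≤ L * |t₂ - t₁| := by
    have := hL.dist_le_mul t₂ h2 t₁ h1
    rwa [Real.dist_eq] at this
  have hn : ‖z t₂ - z t₁‖ = dist (z t₂) (z t₁) := (dist_eq_norm _ _).symm
  constructor
  · exact le_trans (norm_fst_le _) (by rw [hn]; exact hd)
  · exact le_trans (norm_snd_le _) (by rw [hn]; exact hd)

lemma sigma_index_nonempty {S : ℝ} (hS : 0 < S) :
    Nonempty {q : ℝ × ℝ // q.1 ∈ Icc 0 S ∧ q.2 ∈ Icc 0 S ∧ q.1 ≠ q.2} :=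
  ⟨⟨(0, S), ⟨left_mem_Icc.2 hS.le, right_mem_Icc.2 hS.le, hS.ne⟩⟩⟩

lemma quotient_bound {S : ℝ} {z : ℝ → E n × E m} {L : NNReal}
    (hL : LipschitzOnWith L z (Icc 0 S)) {η : ℝ} (hη : 0 < η)
    (p : {q : ℝ × ℝ // q.1 ∈ Icc 0 S ∧ q.2 ∈ Icc 0 S ∧ q.1 ≠ q.2}) :
    etaNorm η (z p.1.2 - z p.1.1) / |p.1.2 - p.1.1| ≤ L * Real.sqrt (1 + η⁻¹) := by
  obtain ⟨⟨t₁, t₂⟩, h1, h2, hne⟩ := p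
  dsimp only at h1 h2 hne ⊢
  have hd : 0 < |t₂ - t₁| := abs_pos.2 (sub_ne_zero.2 (Ne.symm hne))
  obtain ⟨hw1, hw2⟩ := norm_le_lip hL h1 h2
  rw [div_le_iff₀ hd]
  have hmain : etaNorm η (z t₂ - z t₁) ≤ (L * |t₂ - t₁|) * Real.sqrt (1 + η⁻¹) := by
    unfold etaNorm
    have h3 : ‖(z t₂ - z t₁).1‖ ^ 2 + η⁻¹ * ‖(z t₂ - z t₁).2‖ ^ 2
        ≤ (L * |t₂ - t₁|) ^ 2 * (1 + η⁻¹) := by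
      have hinv : 0 ≤ η⁻¹ := by positivity
      have e1 : ‖(z t₂ - z t₁).1‖ ^ 2 ≤ (L * |t₂ - t₁|) ^ 2 :=
        pow_le_pow_left₀ (norm_nonneg _) hw1 2
      have e2 : η⁻¹ * ‖(z t₂ - z t₁).2‖ ^ 2 ≤ η⁻¹ * (L * |t₂ - t₁|) ^ 2 :=
        mul_le_mul_of_nonneg_left (pow_le_pow_left₀ (norm_nonneg _) hw2 2) hinv
      nlinarith [e1, e2]
    calc Real.sqrt (‖(z t₂ - z t₁).1‖ ^ 2 + η⁻¹ * ‖(z t₂ - z t₁).2‖ ^ 2)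
        ≤ Real.sqrt ((L * |t₂ - t₁|) ^ 2 * (1 + η⁻¹)) := Real.sqrt_le_sqrt h3
      _ = (L * |t₂ - t₁|) * Real.sqrt (1 + η⁻¹) := by
          rw [Real.sqrt_mul (sq_nonneg _), Real.sqrt_sq (by positivity)]
  calc etaNorm η (z t₂ - z t₁) ≤ (L * |t₂ - t₁|) * Real.sqrt (1 + η⁻¹) := hmain
    _ = (L * Real.sqrt (1 + η⁻¹)) * |t₂ - t₁| := by ring

lemma sigma_diff_bound {S : ℝ} (hS : 0 < S) {z : ℝ → E n × E m} {L : NNReal}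
    (hL : LipschitzOnWith L z (Icc 0 S)) {η η' : ℝ} (hη : 0 < η) (hη' : 0 < η') :
    sigmaEta S z η ≤ sigmaEta S z η' + Real.sqrt |η⁻¹ - η'⁻¹| * L := by
  haveI := sigma_index_nonempty hS
  unfold sigmaEta
  refine ciSup_le fun p => ?_
  have hbd' : BddAbove (Set.range fun p : {q : ℝ × ℝ // q.1 ∈ Icc 0 S ∧ q.2 ∈ Icc 0 S ∧ q.1 ≠ q.2} =>
      etaNorm η' (z p.1.2 - z p.1.1) / |p.1.2 - p.1.1|) := by
    refine ⟨L * Real.sqrt (1 + η'⁻¹), ?_⟩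
    rintro _ ⟨p, rfl⟩
    exact quotient_bound hL hη' p
  obtain ⟨⟨t₁, t₂⟩, h1, h2, hne⟩ := p
  dsimp only at h1 h2 hne ⊢
  have hd : 0 < |t₂ - t₁| := abs_pos.2 (sub_ne_zero.2 (Ne.symm hne))
  obtain ⟨hw1, hw2⟩ := norm_le_lip hL h1 h2
  have key : etaNorm η (z t₂ - z t₁) / |t₂ - t₁|
      ≤ etaNorm η' (z t₂ - z t₁) / |t₂ - t₁| + Real.sqrt |η⁻¹ - η'⁻¹| * L := by
    have h5 := etaNorm_le_etaNorm_add (η := η) hη' (z t₂ - z t₁)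
    have h6 : etaNorm η (z t₂ - z t₁) / |t₂ - t₁|
        ≤ (etaNorm η' (z t₂ - z t₁) + Real.sqrt |η⁻¹ - η'⁻¹| * ‖(z t₂ - z t₁).2‖) / |t₂ - t₁| := by
      gcongr
    have h7 : (etaNorm η' (z t₂ - z t₁) + Real.sqrt |η⁻¹ - η'⁻¹| * ‖(z t₂ - z t₁).2‖) / |t₂ - t₁|
        = etaNorm η' (z t₂ - z t₁) / |t₂ - t₁|
          + Real.sqrt |η⁻¹ - η'⁻¹| * (‖(z t₂ - z t₁).2‖ / |t₂ - t₁|) := by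
      field_simp
    have h8 : ‖(z t₂ - z t₁).2‖ / |t₂ - t₁| ≤ L := by
      rw [div_le_iff₀ hd]; exact hw2
    have h9 : Real.sqrt |η⁻¹ - η'⁻¹| * (‖(z t₂ - z t₁).2‖ / |t₂ - t₁|)
        ≤ Real.sqrt |η⁻¹ - η'⁻¹| * L :=
      mul_le_mul_of_nonneg_left h8 (Real.sqrt_nonneg _)
    rw [h7] at h6
    linarith
  have h10 : etaNorm η' (z t₂ - z t₁) / |t₂ - t₁| ≤ sigmaEta S z η' :=
    le_ciSup hbd' ⟨(t₁, t₂), h1, h2, hne⟩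
  calc etaNorm η (z t₂ - z t₁) / |t₂ - t₁|
      ≤ etaNorm η' (z t₂ - z t₁) / |t₂ - t₁| + Real.sqrt |η⁻¹ - η'⁻¹| * L := key
    _ ≤ sigmaEta S z η' + Real.sqrt |η⁻¹ - η'⁻¹| * L := by linarith

lemma continuousAt_sigmaEta {S : ℝ} (hS : 0 < S) {z : ℝ → E n × E m} {L : NNReal}
    (hL : LipschitzOnWith L z (Icc 0 S)) {η₀ : ℝ} (hη₀ : 0 < η₀) :
    ContinuousAt (sigmaEta S z) η₀ := by
  have hb : Tendsto (fun η : ℝ => Real.sqrt |η⁻¹ - η₀⁻¹| * L) (𝓝 η₀) (𝓝 0) := by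
    have hc : ContinuousAt (fun η : ℝ => Real.sqrt |η⁻¹ - η₀⁻¹| * L) η₀ := by
      apply ContinuousAt.mul _ continuousAt_const
      apply Real.continuous_sqrt.continuousAt.comp
      apply continuous_abs.continuousAt.comp
      exact (continuousAt_inv₀ hη₀.ne').sub continuousAt_const
    have hv : Real.sqrt |η₀⁻¹ - η₀⁻¹| * L = 0 := by simp
    rw [← hv]
    exact hc
  rw [ContinuousAt, tendsto_iff_dist_tendsto_zero]
  refine squeeze_zero' (Eventually.of_forall fun _ => dist_nonneg) ?_ hb
  · filter_upwards [Ioi_mem_nhds hη₀] with η hη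
    rw [Real.dist_eq, abs_sub_le_iff]
    constructor
    · linarith [sigma_diff_bound hS hL hη hη₀]
    · have := sigma_diff_bound hS hL hη₀ hη
      rw [abs_sub_comm] at this
      linarith

end sigma


section Hess
variable {n m : ℕ}

instance instContAddE2 {n : ℕ} {F : Type*} [NormedAddCommGroup F] [NormedSpace ℝ F] :
    ContinuousAdd (E n →L[ℝ] E n →L[ℝ] F) :=
  (inferInstance : IsTopologicalAddGroup (E n →L[ℝ] E n →L[ℝ] F)).toContinuousAdd

lemma second_fderiv_sum_components {g : E n → E m} (hg : ContDiff ℝ 2 g) (x : E n) :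
    fderiv ℝ (fderiv ℝ g) x
      = ∑ i, ((ContinuousLinearMap.compL ℝ (E n) ℝ (E m))
          (ContinuousLinearMap.toSpanSingleton ℝ
            (EuclideanSpace.single i (1:ℝ)))).comp
          (fderiv ℝ (fderiv ℝ (fun y => g y i)) x) := by
  set ι : Fin m → (ℝ →L[ℝ] E m) := fun i =>
    ContinuousLinearMap.toSpanSingleton ℝ (EuclideanSpace.single i (1:ℝ)) with hι
  have hgi : ∀ i : Fin m, ContDiff ℝ 2 (fun y => g y i) := fun i =>
    (EuclideanSpace.proj (𝕜 := ℝ) i).contDiff.comp hg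
  have hgdiff : Differentiable ℝ g := hg.differentiable (by norm_num)
  have hgidiff : ∀ i, Differentiable ℝ (fun y => g y i) := fun i =>
    (hgi i).differentiable (by norm_num)
  have hgi1 : ∀ i, Differentiable ℝ (fderiv ℝ (fun y => g y i)) := fun i =>
    ((hgi i).fderiv_right (m := 1) (by norm_num)).differentiable (by norm_num)
  -- pointwise representation of g
  have hrep : ∀ y : E n, g y = ∑ i, (ι i) ((fun z => g z i) y) := by
    intro y
    ext j
    simp only [hι, ContinuousLinearMap.toSpanSingleton_apply]
    symm
    rw [WithLp.ofLp_sum, Finset.sum_apply]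
    simp [EuclideanSpace.single_apply]
  -- first derivative
  have hD1 : ∀ y : E n, fderiv ℝ g y
      = ∑ i, (ι i).comp (fderiv ℝ (fun z => g z i) y) := by
    intro y
    have h1 : HasFDerivAt (fun z => ∑ i, (ι i) (g z i))
        (∑ i, (ι i).comp (fderiv ℝ (fun z => g z i) y)) y := by
      apply HasFDerivAt.fun_sum
      intro i _
      exact ((ι i).hasFDerivAt).comp y ((hgidiff i y).hasFDerivAt)
    have h2 : HasFDerivAt g (∑ i, (ι i).comp (fderiv ℝ (fun z => g z i) y)) y := by
      apply h1.congr_of_eventuallyEq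
      filter_upwards with z
      exact (hrep z)
    exact h2.fderiv
  -- second derivative
  have h3 : HasFDerivAt (fun y => ∑ i, (ι i).comp (fderiv ℝ (fun z => g z i) y))
      (∑ i, ((ContinuousLinearMap.compL ℝ (E n) ℝ (E m)) (ι i)).comp
        (fderiv ℝ (fderiv ℝ (fun z => g z i)) x)) x := by
    apply HasFDerivAt.fun_sum
    intro i _
    have h4 : HasFDerivAt (fun y => ((ContinuousLinearMap.compL ℝ (E n) ℝ (E m)) (ι i))
        (fderiv ℝ (fun z => g z i) y))
        (((ContinuousLinearMap.compL ℝ (E n) ℝ (E m)) (ι i)).comp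
          (fderiv ℝ (fderiv ℝ (fun z => g z i)) x)) x :=
      (((ContinuousLinearMap.compL ℝ (E n) ℝ (E m)) (ι i)).hasFDerivAt).comp x
        ((hgi1 i x).hasFDerivAt)
    apply h4.congr_of_eventuallyEq
    filter_upwards with y
    rw [ContinuousLinearMap.compL_apply]
  have h5 : HasFDerivAt (fderiv ℝ g)
      (∑ i, ((ContinuousLinearMap.compL ℝ (E n) ℝ (E m)) (ι i)).comp
        (fderiv ℝ (fderiv ℝ (fun z => g z i)) x)) x := by
    apply h3.congr_of_eventuallyEq
    filter_upwards with y
    exact hD1 y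
  exact h5.fderiv

lemma contOn_D2_vec {S : ℝ} {f : E n → ℝ → E m}
    (hf : ∀ t ∈ Icc 0 S, ContDiff ℝ 2 fun x => f x t)
    (hH : ∀ i : Fin m, ContinuousOn
      (fun p : E n × ℝ => fderiv ℝ (fderiv ℝ fun x => f x p.2 i) p.1) (univ ×ˢ Icc 0 S)) :
    ContinuousOn (fun p : E n × ℝ => fderiv ℝ (fderiv ℝ fun x => f x p.2) p.1)
      (univ ×ˢ Icc 0 S) := by
  have heq : ∀ p ∈ (univ ×ˢ Icc 0 S : Set (E n × ℝ)),
      fderiv ℝ (fderiv ℝ fun x => f x p.2) p.1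
        = ∑ i, ((ContinuousLinearMap.compL ℝ (E n) ℝ (E m))
            (ContinuousLinearMap.toSpanSingleton ℝ
              (EuclideanSpace.single i (1:ℝ)))).comp
            (fderiv ℝ (fderiv ℝ (fun y => f y p.2 i)) p.1) := fun p hp =>
    second_fderiv_sum_components (hf p.2 hp.2) p.1
  refine ContinuousOn.congr ?_ heq
  apply continuousOn_finset_sum
  intro i _
  have hc : Continuous fun B : E n →L[ℝ] E n →L[ℝ] ℝ =>
      ((ContinuousLinearMap.compL ℝ (E n) ℝ (E m))
        (ContinuousLinearMap.toSpanSingleton ℝ (EuclideanSpace.single i (1:ℝ)))).comp B := by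
    exact ((ContinuousLinearMap.compL ℝ (E n) (E n →L[ℝ] ℝ) (E n →L[ℝ] E m))
      ((ContinuousLinearMap.compL ℝ (E n) ℝ (E m))
        (ContinuousLinearMap.toSpanSingleton ℝ (EuclideanSpace.single i (1:ℝ))))).continuous
  exact hc.comp_continuousOn (hH i)


def Jd (d : ℕ) : (E d →L[ℝ] ℝ) →L[ℝ] E d :=
  LinearMap.mkContinuous
    { toFun := fun e => (InnerProductSpace.toDual ℝ (E d)).symm e
      map_add' := fun a b => by simp
      map_smul' := fun r a => by
        simp }
    1 (fun e => by
      rw [one_mul]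
      exact le_of_eq ((InnerProductSpace.toDual ℝ (E d)).symm.norm_map e))

lemma gradient_eq_Jd {d : ℕ} (g : E d → ℝ) (y : E d) :
    gradient g y = Jd d (fderiv ℝ g y) := rfl

lemma hessOp_eq_J_comp {d : ℕ} {g : E d → ℝ} (hg : ContDiff ℝ 2 g) (x : E d) :
    hessOp g x = (Jd d).comp (fderiv ℝ (fderiv ℝ g) x) := by
  have hdiff : DifferentiableAt ℝ (fderiv ℝ g) x :=
    ((hg.fderiv_right (m := 1) (by norm_num)).differentiable (by norm_num)).differentiableAt
  have h1 : HasFDerivAt (fun y => (Jd d) (fderiv ℝ g y))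
      ((Jd d).comp (fderiv ℝ (fderiv ℝ g) x)) x :=
    ((Jd d).hasFDerivAt).comp x hdiff.hasFDerivAt
  have h2 : HasFDerivAt (gradient g) ((Jd d).comp (fderiv ℝ (fderiv ℝ g) x)) x := by
    apply h1.congr_of_eventuallyEq
    filter_upwards with y
    rfl
  exact h2.fderiv

lemma contDiff_comp_proj {f : E n → ℝ → E m} {t : ℝ} (hft : ContDiff ℝ 2 fun x => f x t)
    (i : Fin m) : ContDiff ℝ 2 fun x => f x t i :=
  (EuclideanSpace.proj (𝕜 := ℝ) i).contDiff.comp hft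

lemma Lnc_eq_sum (c : E n → ℝ → ℝ) (fnc : E n → ℝ → E m) (lam : E m) (t : ℝ) :
    (fun x => Lnc c fnc x lam t) = fun x => c x t + ∑ i, lam i * fnc x t i := by
  funext x
  simp [Lnc, PiLp.inner_apply, RCLike.inner_apply, conj_trivial, mul_comm]

lemma contDiff_Lnc {c : E n → ℝ → ℝ} {fnc : E n → ℝ → E m} {t : ℝ} (lam : E m)
    (hct : ContDiff ℝ 2 fun x => c x t) (hft : ContDiff ℝ 2 fun x => fnc x t) :
    ContDiff ℝ 2 fun x => Lnc c fnc x lam t := by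
  rw [Lnc_eq_sum]
  apply hct.add
  apply ContDiff.sum
  intro i _
  exact (contDiff_const (c := lam i)).mul (contDiff_comp_proj hft i)

lemma fderiv2_lagrangian {c : E n → ℝ → ℝ} {fnc : E n → ℝ → E m} {t : ℝ} (lam : E m)
    (hct : ContDiff ℝ 2 fun x => c x t) (hft : ContDiff ℝ 2 fun x => fnc x t) (y : E n) :
    fderiv ℝ (fderiv ℝ (fun x => Lnc c fnc x lam t)) y
      = fderiv ℝ (fderiv ℝ (fun x => c x t)) y
        + ∑ i, lam i • fderiv ℝ (fderiv ℝ (fun x => fnc x t i)) y := by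
  have hfi : ∀ i : Fin m, ContDiff ℝ 2 fun x => fnc x t i := contDiff_comp_proj hft
  have hdc : Differentiable ℝ fun x => c x t := hct.differentiable (by norm_num)
  have hdfi : ∀ i, Differentiable ℝ fun x => fnc x t i := fun i =>
    (hfi i).differentiable (by norm_num)
  have hdc1 : Differentiable ℝ (fderiv ℝ fun x => c x t) :=
    (hct.fderiv_right (m := 1) (by norm_num)).differentiable (by norm_num)
  have hdfi1 : ∀ i, Differentiable ℝ (fderiv ℝ fun x => fnc x t i) := fun i =>
    ((hfi i).fderiv_right (m := 1) (by norm_num)).differentiable (by norm_num)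
  have hD1 : ∀ z : E n, fderiv ℝ (fun x => c x t + ∑ i, lam i * fnc x t i) z
      = fderiv ℝ (fun x => c x t) z + ∑ i, lam i • fderiv ℝ (fun x => fnc x t i) z := by
    intro z
    rw [fderiv_fun_add (hdc z) (by
      apply DifferentiableAt.fun_sum
      intro i _
      exact (differentiableAt_const _).mul (hdfi i z))]
    congr 1
    rw [fderiv_fun_sum (fun i _ => (differentiableAt_const _).fun_mul (hdfi i z))]
    apply Finset.sum_congr rfl
    intro i _
    exact fderiv_const_mul (hdfi i z) (lam i)
  have hfun1 : fderiv ℝ (fun x => Lnc c fnc x lam t)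
      = fun z => fderiv ℝ (fun x => c x t) z
          + ∑ i, lam i • fderiv ℝ (fun x => fnc x t i) z := by
    funext z
    rw [Lnc_eq_sum]
    exact hD1 z
  rw [hfun1]
  have h2 : HasFDerivAt (fun z => fderiv ℝ (fun x => c x t) z
      + ∑ i, lam i • fderiv ℝ (fun x => fnc x t i) z)
      (fderiv ℝ (fderiv ℝ (fun x => c x t)) y
        + ∑ i, lam i • fderiv ℝ (fderiv ℝ (fun x => fnc x t i)) y) y := by
    apply HasFDerivAt.add
    · exact (hdc1 y).hasFDerivAt
    · apply HasFDerivAt.fun_sum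
      intro i _
      exact ((hdfi1 i y).hasFDerivAt).const_smul (lam i)
  exact h2.fderiv

lemma hessOp_lagrangian {c : E n → ℝ → ℝ} {fnc : E n → ℝ → E m} {t : ℝ} (lam : E m)
    (hct : ContDiff ℝ 2 fun x => c x t) (hft : ContDiff ℝ 2 fun x => fnc x t) (y : E n) :
    hessOp (fun x => Lnc c fnc x lam t) y
      = (Jd n).comp (fderiv ℝ (fderiv ℝ (fun x => c x t)) y
          + ∑ i, lam i • fderiv ℝ (fderiv ℝ (fun x => fnc x t i)) y) := by
  rw [hessOp_eq_J_comp (contDiff_Lnc lam hct hft), fderiv2_lagrangian lam hct hft y]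


end Hess

end Aux

section Param
variable {n m : ℕ}

lemma continuous_hessOp {d : ℕ} {g : E d → ℝ} (hg : ContDiff ℝ 2 g) :
    Continuous (hessOp g) := by
  have h2 : Continuous (fderiv ℝ (fderiv ℝ g)) :=
    (hg.fderiv_right (m := 1) (by norm_num)).continuous_fderiv one_ne_zero
  have h3 : Continuous fun x => (Jd d).comp (fderiv ℝ (fderiv ℝ g) x) :=
    (((ContinuousLinearMap.compL ℝ (E d) (E d →L[ℝ] ℝ) (E d)) (Jd d)).continuous).comp h2
  have h4 : hessOp g = fun x => (Jd d).comp (fderiv ℝ (fderiv ℝ g) x) :=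
    funext fun x => hessOp_eq_J_comp hg x
  rw [h4]; exact h3

lemma contOn_paramInt {S : ℝ} {V : Type*} [NormedAddCommGroup V] [NormedSpace ℝ V]
    (Φ : ℝ × (ℝ × E n) → V)
    (hΦ : ContinuousOn Φ (Icc 0 1 ×ˢ (Icc 0 S ×ˢ univ))) :
    ContinuousOn (fun q : ℝ × E n => ∫ θ in (0:ℝ)..1, Φ (θ, q)) (Icc 0 S ×ˢ univ) := by
  intro q₀ hq₀
  rw [Metric.continuousWithinAt_iff]
  intro ε hε
  set D := Icc (0:ℝ) 1 ×ˢ (closedBall q₀ 1 ∩ (Icc 0 S ×ˢ univ)) with hD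
  have hDc : IsCompact D :=
    isCompact_Icc.prod ((isCompact_closedBall q₀ 1).inter_right
      (isClosed_Icc.prod isClosed_univ))
  have hΦD : ContinuousOn Φ D := hΦ.mono (fun p hp => ⟨hp.1, hp.2.2⟩)
  have hUC := hDc.uniformContinuousOn_of_continuous hΦD
  rw [Metric.uniformContinuousOn_iff] at hUC
  obtain ⟨dd, hdd, hUC⟩ := hUC (ε / 2) (by linarith)
  refine ⟨min dd 1, by positivity, ?_⟩
  intro q hq hdist
  have hint : ∀ q' : ℝ × E n, q' ∈ (Icc 0 S ×ˢ univ : Set (ℝ × E n)) →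
      IntervalIntegrable (fun θ => Φ (θ, q')) volume 0 1 := by
    intro q' hq'
    apply ContinuousOn.intervalIntegrable
    rw [uIcc_of_le zero_le_one]
    exact hΦ.comp ((continuous_id.prodMk continuous_const).continuousOn)
      (fun θ hθ => ⟨hθ, hq'⟩)
  have h1 := hint q hq
  have h0 := hint q₀ hq₀
  rw [dist_eq_norm, ← intervalIntegral.integral_sub h1 h0]
  have hb : ∀ θ ∈ Set.uIoc (0:ℝ) 1, ‖Φ (θ, q) - Φ (θ, q₀)‖ ≤ ε / 2 := by
    intro θ hθ
    have hθ' : θ ∈ Icc (0:ℝ) 1 := by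
      rw [uIoc_of_le zero_le_one] at hθ; exact Ioc_subset_Icc_self hθ
    have hmem1 : (θ, q) ∈ D :=
      ⟨hθ', ⟨mem_closedBall.2 (le_of_lt (lt_of_lt_of_le hdist (min_le_right _ _))), hq⟩⟩
    have hmem0 : (θ, q₀) ∈ D := ⟨hθ', ⟨mem_closedBall_self zero_le_one, hq₀⟩⟩
    have hd2 : dist ((θ, q) : ℝ × (ℝ × E n)) (θ, q₀) < dd := by
      rw [Prod.dist_eq]
      simp only [dist_self]
      rw [max_eq_right dist_nonneg]
      exact lt_of_lt_of_le hdist (min_le_left _ _)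
    have h := hUC _ hmem1 _ hmem0 hd2
    rw [dist_eq_norm] at h
    exact h.le
  calc ‖∫ θ in (0:ℝ)..1, (Φ (θ, q) - Φ (θ, q₀))‖ ≤ ε / 2 * |1 - 0| :=
        intervalIntegral.norm_integral_le_of_norm_le_const hb
    _ < ε := by rw [show |(1:ℝ) - 0| = 1 by norm_num]; linarith

lemma continuousAt_Mnc {S : ℝ} (hS : 0 < S) (fnc : E n → ℝ → E m) (xs : ℝ → E n)
    (hfnc : ∀ t ∈ Icc 0 S, ContDiff ℝ 2 fun x => fnc x t)
    (hfncH : ∀ i : Fin m, ContinuousOn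
      (fun p : E n × ℝ => fderiv ℝ (fderiv ℝ fun x => fnc x p.2 i) p.1) (univ ×ˢ Icc 0 S))
    (hxs : ContinuousOn xs (Icc 0 S)) {δ₀ : ℝ} (hδ₀ : 0 < δ₀) :
    ContinuousAt (fun δ => Mnc S fnc xs δ) δ₀ := by
  have hvec := contOn_D2_vec hfnc hfncH
  have hmap : ContinuousOn (fun q : ℝ × E n => ((xs q.1 + q.2, q.1) : E n × ℝ))
      (Icc 0 S ×ˢ univ) := by
    apply ContinuousOn.prodMk
    · exact ((hxs.comp continuous_fst.continuousOn (fun q hq => hq.1)).add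
        continuous_snd.continuousOn)
    · exact continuous_fst.continuousOn
  have hG : ContinuousOn
      (fun q : ℝ × E n => ‖fderiv ℝ (fderiv ℝ fun x => fnc x q.1) (xs q.1 + q.2)‖)
      (Icc 0 S ×ˢ univ) :=
    ContinuousOn.norm (E := E n →L[ℝ] E n →L[ℝ] E m) (hvec.comp hmap (fun q hq => ⟨mem_univ _, hq.1⟩))
  unfold Mnc
  exact continuousAt_iSup_K hS _ hG hδ₀

lemma continuousAt_LambdaM {S : ℝ} (hS : 0 < S) (c : E n → ℝ → ℝ)
    (fc fnc : E n → ℝ → E m) (xs : ℝ → E n) (ls : ℝ → E m)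
    (hc : ∀ t ∈ Icc 0 S, ContDiff ℝ 2 fun x => c x t)
    (hfc : ∀ t ∈ Icc 0 S, ContDiff ℝ 2 fun x => fc x t)
    (hfnc : ∀ t ∈ Icc 0 S, ContDiff ℝ 2 fun x => fnc x t)
    (hcH : ContinuousOn (fun p : E n × ℝ => fderiv ℝ (fderiv ℝ fun x => c x p.2) p.1)
      (univ ×ˢ Icc 0 S))
    (hfcH : ∀ i : Fin m, ContinuousOn
      (fun p : E n × ℝ => fderiv ℝ (fderiv ℝ fun x => fc x p.2 i) p.1) (univ ×ˢ Icc 0 S))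
    (hfncH : ∀ i : Fin m, ContinuousOn
      (fun p : E n × ℝ => fderiv ℝ (fderiv ℝ fun x => fnc x p.2 i) p.1) (univ ×ˢ Icc 0 S))
    (hxs : ContinuousOn xs (Icc 0 S)) (hls : ContinuousOn ls (Icc 0 S))
    {δ₀ : ℝ} (hδ₀ : 0 < δ₀) :
    ContinuousAt (fun δ => LambdaM S c fc fnc xs ls δ) δ₀ := by
  classical
  set ψ : ℝ × (ℝ × E n) → E n × ℝ := fun r => (xs r.2.1 + r.1 • r.2.2, r.2.1) with hψdef
  set Φ : ℝ × (ℝ × E n) → (E n →L[ℝ] E n) := fun r =>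
    (Jd n).comp ((fderiv ℝ (fderiv ℝ fun x => c x (ψ r).2) (ψ r).1)
        + ∑ i, ls r.2.1 i • fderiv ℝ (fderiv ℝ fun x => fnc x (ψ r).2 i) (ψ r).1)
      + (2⁻¹ : ℝ) • ∑ i, ls r.2.1 i •
          ((2 * (1 - r.1)) • (Jd n).comp
            (fderiv ℝ (fderiv ℝ fun x => fc x (ψ r).2 i) (ψ r).1)) with hΦdef
  have hDset : MapsTo ψ (Icc (0:ℝ) 1 ×ˢ (Icc 0 S ×ˢ (univ : Set (E n))))
      (univ ×ˢ Icc 0 S) := fun r hr => ⟨mem_univ _, hr.2.1⟩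
  have hψc : ContinuousOn ψ (Icc 0 1 ×ˢ (Icc 0 S ×ˢ univ)) := by
    apply ContinuousOn.prodMk
    · apply ContinuousOn.add
      · exact hxs.comp (continuous_fst.comp continuous_snd).continuousOn
          (fun r hr => hr.2.1)
      · exact (continuous_fst.smul (continuous_snd.comp continuous_snd)).continuousOn
    · exact (continuous_fst.comp continuous_snd).continuousOn
  have hlsc : ∀ i : Fin m, ContinuousOn (fun r : ℝ × (ℝ × E n) => ls r.2.1 i)
      (Icc 0 1 ×ˢ (Icc 0 S ×ˢ univ)) := by
    intro i
    have h := hls.comp (continuous_fst.comp continuous_snd).continuousOn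
      (fun r (hr : r ∈ Icc (0:ℝ) 1 ×ˢ (Icc 0 S ×ˢ (univ : Set (E n)))) => hr.2.1)
    exact (EuclideanSpace.proj (𝕜 := ℝ) i).continuous.comp_continuousOn h
  have Tcont : Continuous fun B : E n →L[ℝ] E n →L[ℝ] ℝ => (Jd n).comp B :=
    ((ContinuousLinearMap.compL ℝ (E n) (E n →L[ℝ] ℝ) (E n)) (Jd n)).continuous
  have hΦc : ContinuousOn Φ (Icc 0 1 ×ˢ (Icc 0 S ×ˢ univ)) := by
    apply ContinuousOn.add
    · apply Tcont.comp_continuousOn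
      apply ContinuousOn.fun_add
      · exact hcH.comp hψc hDset
      · apply continuousOn_finset_sum
        intro i _
        exact (hlsc i).smul ((hfncH i).comp hψc hDset)
    · apply ContinuousOn.fun_const_smul
      apply continuousOn_finset_sum
      intro i _
      apply (hlsc i).smul
      apply ContinuousOn.fun_smul
      · exact (continuous_const.mul (continuous_const.sub continuous_fst)).continuousOn
      · exact Tcont.comp_continuousOn ((hfcH i).comp hψc hDset)
  have hAeq : ∀ q ∈ (Icc 0 S ×ˢ univ : Set (ℝ × E n)),
      HbarL c fnc xs ls q.2 q.1 + (2⁻¹ : ℝ) • ∑ i, ls q.1 i • Hbarfc fc xs i q.2 q.1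
        = ∫ θ in (0:ℝ)..1, Φ (θ, q) := by
    rintro ⟨t, u⟩ hq
    have ht : t ∈ Icc 0 S := hq.1
    have hL2 : ContDiff ℝ 2 fun x => Lnc c fnc x (ls t) t :=
      contDiff_Lnc _ (hc t ht) (hfnc t ht)
    have hg₁ : Continuous fun θ : ℝ =>
        hessOp (fun x => Lnc c fnc x (ls t) t) (xs t + θ • u) := by
      apply (continuous_hessOp hL2).comp
      exact continuous_const.add (continuous_id.smul continuous_const)
    have hg₂ : ∀ i : Fin m, Continuous fun θ : ℝ =>
        (2 * (1 - θ)) • hessOp (fun x => fc x t i) (xs t + θ • u) := by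
      intro i
      apply Continuous.fun_smul
      · exact continuous_const.mul (continuous_const.sub continuous_id)
      · exact (continuous_hessOp (contDiff_comp_proj (hfc t ht) i)).comp
          (continuous_const.add (continuous_id.smul continuous_const))
    have step1 : ∑ i, ls t i • Hbarfc fc xs i u t
        = ∫ θ in (0:ℝ)..1, ∑ i, ls t i •
            ((2 * (1 - θ)) • hessOp (fun x => fc x t i) (xs t + θ • u)) := by
      calc ∑ i, ls t i • Hbarfc fc xs i u t
          = ∑ i, ∫ θ in (0:ℝ)..1, ls t i •
              ((2 * (1 - θ)) • hessOp (fun x => fc x t i) (xs t + θ • u)) := by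
            apply Finset.sum_congr rfl
            intro i _
            rw [intervalIntegral.integral_smul]
            rfl
        _ = _ := (intervalIntegral.integral_finset_sum
            (fun i _ => (continuous_const.fun_smul (hg₂ i)).intervalIntegrable 0 1)).symm
    have step2 : HbarL c fnc xs ls u t
        + (2⁻¹ : ℝ) • ∑ i, ls t i • Hbarfc fc xs i u t
        = ∫ θ in (0:ℝ)..1,
            (hessOp (fun x => Lnc c fnc x (ls t) t) (xs t + θ • u)
              + (2⁻¹ : ℝ) • ∑ i, ls t i •
                  ((2 * (1 - θ)) • hessOp (fun x => fc x t i) (xs t + θ • u))) := by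
      have i1 := hg₁.intervalIntegrable (μ := volume) 0 1
      have i2 : IntervalIntegrable (fun θ : ℝ => (2⁻¹ : ℝ) • ∑ i, ls t i •
          ((2 * (1 - θ)) • hessOp (fun x => fc x t i) (xs t + θ • u))) volume 0 1 := by
        apply Continuous.intervalIntegrable
        apply continuous_const.fun_smul
        apply continuous_finset_sum
        intro i _
        exact continuous_const.fun_smul (hg₂ i)
      calc HbarL c fnc xs ls u t + (2⁻¹ : ℝ) • ∑ i, ls t i • Hbarfc fc xs i u t
          = (∫ θ in (0:ℝ)..1, hessOp (fun x => Lnc c fnc x (ls t) t) (xs t + θ • u))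
            + ∫ θ in (0:ℝ)..1, (2⁻¹ : ℝ) • ∑ i, ls t i •
                ((2 * (1 - θ)) • hessOp (fun x => fc x t i) (xs t + θ • u)) := by
            rw [step1, intervalIntegral.integral_smul]
            rfl
        _ = _ := (intervalIntegral.integral_add i1 i2).symm
    rw [step2]
    apply intervalIntegral.integral_congr
    intro θ _
    have e1 : hessOp (fun x => Lnc c fnc x (ls t) t) (xs t + θ • u)
        = (Jd n).comp ((fderiv ℝ (fderiv ℝ fun x => c x t) (xs t + θ • u))
            + ∑ i, ls t i • fderiv ℝ (fderiv ℝ fun x => fnc x t i) (xs t + θ • u)) :=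
      hessOp_lagrangian (ls t) (hc t ht) (hfnc t ht) _
    have e2 : ∀ i : Fin m, hessOp (fun x => fc x t i) (xs t + θ • u)
        = (Jd n).comp (fderiv ℝ (fderiv ℝ fun x => fc x t i) (xs t + θ • u)) :=
      fun i => hessOp_eq_J_comp (contDiff_comp_proj (hfc t ht) i) _
    simp only [hΦdef, hψdef, e1]
    congr 2
    apply Finset.sum_congr rfl
    intro i _
    rw [e2 i]
  have hA : ContinuousOn (fun q : ℝ × E n =>
      HbarL c fnc xs ls q.2 q.1
        + (2⁻¹ : ℝ) • ∑ i, ls q.1 i • Hbarfc fc xs i q.2 q.1) (Icc 0 S ×ˢ univ) :=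
    ContinuousOn.congr (contOn_paramInt Φ hΦc) hAeq
  have hG : ContinuousOn (fun q : ℝ × E n =>
      lambdaMin (HbarL c fnc xs ls q.2 q.1
        + (2⁻¹ : ℝ) • ∑ i, ls q.1 i • Hbarfc fc xs i q.2 q.1)) (Icc 0 S ×ˢ univ) :=
    continuous_lambdaMin.comp_continuousOn hA
  unfold LambdaM
  exact continuousAt_iInf_K hS _ hG hδ₀

end Param


/-- **existence of feasible parameters, continuous time.**
If `Λ_m(δ̄) > M_λ · M_nc(δ̄)` for some `δ̄ > 0`, then the feasible parameter set
`𝒮_fp` is a nonempty open subset of `(0,∞)⁴`. -/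
theorem feasible_parameters_continuous {n m : ℕ} (P : Problem n m)
    (xs : ℝ → E n) (ls : ℝ → E m) (htraj : IsTraj P xs ls)
    (lamprior : E m) (hprior : lamprior ∈ orthant m)
    (hσ : ∀ η : ℝ, 0 < η → 0 < sigmaEta P.S (fun t => (xs t, ls t)) η)
    (hexist : ∃ δbar : ℝ, 0 < δbar ∧
      Mlam P.S ls lamprior * Mnc P.S P.fnc xs δbar
        < LambdaM P.S P.c P.fc P.fnc xs ls δbar) :
    (SfpC P xs ls lamprior).Nonempty ∧ IsOpen (SfpC P xs ls lamprior) := by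
  obtain ⟨δbar, hδbar, hex⟩ := hexist
  obtain ⟨⟨L, hLip⟩, _hfeas⟩ := htraj
  have hzc : ContinuousOn (fun t => (xs t, ls t)) (Icc 0 P.S) := hLip.continuousOn
  have hxsc : ContinuousOn xs (Icc 0 P.S) := continuous_fst.comp_continuousOn hzc
  have hlsc : ContinuousOn ls (Icc 0 P.S) := continuous_snd.comp_continuousOn hzc
  have hN : 0 ≤ Mnc P.S P.fnc xs δbar := Real.iSup_nonneg fun p => ContinuousLinearMap.opNorm_nonneg _
  have hM : 0 ≤ Mlam P.S ls lamprior := Real.iSup_nonneg fun t => norm_nonneg _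
  set M := Mlam P.S ls lamprior with hMdef
  set N := Mnc P.S P.fnc xs δbar with hNdef
  set Λ := LambdaM P.S P.c P.fc P.fnc xs ls δbar with hΛdef
  have hΛ : 0 < Λ := lt_of_le_of_lt (mul_nonneg hM hN) hex
  constructor
  · -- nonemptiness
    set r := (Λ - M * N) / (N + 1) with hr
    have hrpos : 0 < r := div_pos (by linarith) (by linarith)
    set s := (2 * M + r) / δbar with hs
    have hspos : 0 < s := div_pos (by linarith) hδbar
    have hsδ : s * δbar = 2 * M + r := by
      rw [hs, div_mul_cancel₀ _ hδbar.ne']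
    set η := s ^ 2 with hη
    have hηpos : 0 < η := by positivity
    have hsqrtη : Real.sqrt η = s := Real.sqrt_sq hspos.le
    set ε := Λ / η with hεdef
    have hεpos : 0 < ε := div_pos hΛ hηpos
    have hηε : η * ε = Λ := by
      rw [hεdef]; field_simp
    have hγ : gammaC P.S P.c P.fc P.fnc xs ls δbar η ε
        = Λ - s / 4 * δbar * N := by
      unfold gammaC
      rw [hηε, ← hΛdef, ← hNdef, min_self, hsqrtη]
    have hrN : r * N ≤ Λ - M * N := by
      rw [hr, div_mul_eq_mul_div, div_le_iff₀ (by linarith : (0:ℝ) < N + 1)]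
      nlinarith
    have hsδN : s * δbar * N < 2 * Λ := by nlinarith [hsδ]
    have hA1 : δbar * (s / 4 * δbar * N) < δbar * Λ / 2 := by nlinarith
    have h2M : 2 * M < s * δbar := by rw [hsδ]; linarith
    have hsε : s * ε * M < δbar * Λ / 2 := by
      have e : s * ε = Λ / s := by
        rw [hεdef, hη, eq_div_iff hspos.ne']
        field_simp
      rw [e, div_mul_eq_mul_div, div_lt_iff₀ hspos]
      nlinarith
    set T := δbar * gammaC P.S P.c P.fc P.fnc xs ls δbar η ε
      - Real.sqrt η * ε * M with hT
    have hTpos : 0 < T := by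
      rw [hT, hγ, hsqrtη]
      nlinarith
    set σ := sigmaEta P.S (fun t => (xs t, ls t)) η with hσdef
    have hσpos : 0 < σ := hσ η hηpos
    set β := 2 * σ / T with hβ
    have hβpos : 0 < β := by positivity
    have hβσ : β⁻¹ * σ = T / 2 := by
      rw [hβ, inv_div]
      field_simp
    refine ⟨(δbar, β, η, ε), ?_⟩
    simp only [SfpC, Set.mem_setOf_eq]
    refine ⟨hδbar, hβpos, hηpos, hεpos, ?_⟩
    show β⁻¹ * sigmaEta P.S (fun t => (xs t, ls t)) η
      < δbar * gammaC P.S P.c P.fc P.fnc xs ls δbar η ε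
        - Real.sqrt η * ε * Mlam P.S ls lamprior
    rw [← hσdef, ← hMdef, ← hT, hβσ]
    linarith
  · -- openness
    rw [isOpen_iff_mem_nhds]
    rintro ⟨δ, β, η, ε⟩ hmem
    simp only [SfpC, Set.mem_setOf_eq] at hmem
    obtain ⟨h1, h2, h3, h4, h5⟩ := hmem
    have h1' : (0:ℝ) < δ := h1
    have h2' : (0:ℝ) < β := h2
    have h3' : (0:ℝ) < η := h3
    have h4' : (0:ℝ) < ε := h4
    have h5' : β⁻¹ * sigmaEta P.S (fun t => (xs t, ls t)) η
        < δ * gammaC P.S P.c P.fc P.fnc xs ls δ η ε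
          - Real.sqrt η * ε * M := h5
    have hΛc : ContinuousAt (fun x : ℝ => LambdaM P.S P.c P.fc P.fnc xs ls x) δ :=
      continuousAt_LambdaM P.hS P.c P.fc P.fnc xs ls P.hc P.hfc P.hfnc P.hcHess
        P.hfcHess P.hfncHess hxsc hlsc h1'
    have hNc : ContinuousAt (fun x : ℝ => Mnc P.S P.fnc xs x) δ :=
      continuousAt_Mnc P.hS P.fnc xs P.hfnc P.hfncHess hxsc h1'
    have hσc : ContinuousAt (sigmaEta P.S (fun t => (xs t, ls t))) η :=
      continuousAt_sigmaEta P.hS hLip h3'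
    -- coordinate maps
    have c1 : ContinuousAt (fun q : ℝ × ℝ × ℝ × ℝ => q.1) (δ, β, η, ε) :=
      continuous_fst.continuousAt
    have c2 : ContinuousAt (fun q : ℝ × ℝ × ℝ × ℝ => q.2.1) (δ, β, η, ε) :=
      (continuous_fst.comp continuous_snd).continuousAt
    have c3 : ContinuousAt (fun q : ℝ × ℝ × ℝ × ℝ => q.2.2.1) (δ, β, η, ε) :=
      (continuous_fst.comp (continuous_snd.comp continuous_snd)).continuousAt
    have c4 : ContinuousAt (fun q : ℝ × ℝ × ℝ × ℝ => q.2.2.2) (δ, β, η, ε) :=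
      (continuous_snd.comp (continuous_snd.comp continuous_snd)).continuousAt
    set H : ℝ × ℝ × ℝ × ℝ → ℝ := fun q =>
      q.1 * gammaC P.S P.c P.fc P.fnc xs ls q.1 q.2.2.1 q.2.2.2
        - Real.sqrt q.2.2.1 * q.2.2.2 * M
        - q.2.1⁻¹ * sigmaEta P.S (fun t => (xs t, ls t)) q.2.2.1 with hHdef
    have hgc : ContinuousAt (fun q : ℝ × ℝ × ℝ × ℝ =>
        gammaC P.S P.c P.fc P.fnc xs ls q.1 q.2.2.1 q.2.2.2) (δ, β, η, ε) := by
      have e : (fun q : ℝ × ℝ × ℝ × ℝ =>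
          gammaC P.S P.c P.fc P.fnc xs ls q.1 q.2.2.1 q.2.2.2)
          = fun q => min (LambdaM P.S P.c P.fc P.fnc xs ls q.1) (q.2.2.1 * q.2.2.2)
            - Real.sqrt q.2.2.1 / 4 * q.1 * Mnc P.S P.fnc xs q.1 := rfl
      rw [e]
      apply ContinuousAt.sub
      · exact (hΛc.comp c1).min (c3.mul c4)
      · exact (((Real.continuous_sqrt.continuousAt.comp c3).div_const 4).mul c1).mul
          (ContinuousAt.comp (g := fun x : ℝ => Mnc P.S P.fnc xs x) hNc c1)
    have hHc : ContinuousAt H (δ, β, η, ε) := by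
      rw [hHdef]
      apply ContinuousAt.sub
      · apply ContinuousAt.sub
        · exact c1.mul hgc
        · exact ((Real.continuous_sqrt.continuousAt.comp c3).mul c4).mul continuousAt_const
      · apply ContinuousAt.mul
        · exact (continuousAt_inv₀ h2'.ne').comp c2
        · exact ContinuousAt.comp (g := sigmaEta P.S (fun t => (xs t, ls t))) hσc c3
    have hHpos : 0 < H (δ, β, η, ε) := by
      show 0 < δ * gammaC P.S P.c P.fc P.fnc xs ls δ η ε
        - Real.sqrt η * ε * M
        - β⁻¹ * sigmaEta P.S (fun t => (xs t, ls t)) η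
      linarith
    have e1 : ∀ᶠ q : ℝ × ℝ × ℝ × ℝ in 𝓝 (δ, β, η, ε), 0 < q.1 := c1 (Ioi_mem_nhds h1')
    have e2 : ∀ᶠ q : ℝ × ℝ × ℝ × ℝ in 𝓝 (δ, β, η, ε), 0 < q.2.1 := c2 (Ioi_mem_nhds h2')
    have e3 : ∀ᶠ q : ℝ × ℝ × ℝ × ℝ in 𝓝 (δ, β, η, ε), 0 < q.2.2.1 := c3 (Ioi_mem_nhds h3')
    have e4 : ∀ᶠ q : ℝ × ℝ × ℝ × ℝ in 𝓝 (δ, β, η, ε), 0 < q.2.2.2 := c4 (Ioi_mem_nhds h4')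
    have e5 : ∀ᶠ q : ℝ × ℝ × ℝ × ℝ in 𝓝 (δ, β, η, ε), 0 < H q := hHc (Ioi_mem_nhds hHpos)
    have hev : ∀ᶠ q : ℝ × ℝ × ℝ × ℝ in 𝓝 (δ, β, η, ε), q ∈ SfpC P xs ls lamprior := by
      filter_upwards [e1, e2, e3, e4, e5] with q hq1 hq2 hq3 hq4 hq5
      refine ⟨hq1, hq2, hq3, hq4, ?_⟩
      have hq5' : 0 < q.1 * gammaC P.S P.c P.fc P.fnc xs ls q.1 q.2.2.1 q.2.2.2
          - Real.sqrt q.2.2.1 * q.2.2.2 * M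
          - q.2.1⁻¹ * sigmaEta P.S (fun t => (xs t, ls t)) q.2.2.1 := hq5
      show q.2.1⁻¹ * sigmaEta P.S (fun t => (xs t, ls t)) q.2.2.1
        < q.1 * gammaC P.S P.c P.fc P.fnc xs ls q.1 q.2.2.1 q.2.2.2
          - Real.sqrt q.2.2.1 * q.2.2.2 * Mlam P.S ls lamprior
      rw [← hMdef]
      linarith
    exact hev

end TVOpt
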